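/- arXiv:2209.11405 — 4 statements merged into one kernel-verified Lean document; each statement's English description precedes it below -/
import Mathlib

section
/- Let C₁ ⊆ F₂^{n₁} and C₂ ⊆ F₂^{n₂} be nonzero linear codes with minimum distances d₁ and d₂ respectively (and C₁ ≠ F₂^{n₁}, C₂ ≠ F₂^{n₂} are not needed; assume only C₁, C₂ ≠ 0). Then the minimum distance of the dual tensor code C₁ ⊗ F₂^{n₂} + F₂^{n₁} ⊗ C₂ is exactly min(d₁, d₂). -/
open Matrix Finset

section aux

variable {n₁ n₂ : ℕ}

lemma norm_tensor_right (c : Fin n₁ → ZMod 2) (j : Fin n₂) :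
    hammingNorm (fun p : Fin n₁ × Fin n₂ => c p.1 * (if p.2 = j then (1:ZMod 2) else 0))
      = hammingNorm c := by
  unfold hammingNorm
  apply Finset.card_bij (fun p _ => p.1)
  · intro p hp
    simp only [mem_filter, mem_univ, true_and] at hp ⊢
    intro h; apply hp; simp [h]
  · rintro ⟨a,b⟩ ha ⟨a',b'⟩ ha' h
    simp only [mem_filter, mem_univ, true_and] at ha ha'
    by_cases hb : b = j
    · by_cases hb' : b' = j
      · simp_all
      · simp [hb'] at ha'
    · simp [hb] at ha
  · intro i hi
    simp only [mem_filter, mem_univ, true_and] at hi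
    exact ⟨(i, j), by simp [hi], rfl⟩

lemma norm_tensor_left (c : Fin n₂ → ZMod 2) (i : Fin n₁) :
    hammingNorm (fun p : Fin n₁ × Fin n₂ => (if p.1 = i then (1:ZMod 2) else 0) * c p.2)
      = hammingNorm c := by
  unfold hammingNorm
  apply Finset.card_bij (fun p _ => p.2)
  · intro p hp
    simp only [mem_filter, mem_univ, true_and] at hp ⊢
    intro h; apply hp; simp [h]
  · rintro ⟨a,b⟩ ha ⟨a',b'⟩ ha' h
    simp only [mem_filter, mem_univ, true_and] at ha ha'
    by_cases hb : a = i
    · by_cases hb' : a' = i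
      · simp_all
      · simp [hb'] at ha'
    · simp [hb] at ha
  · intro j hj
    simp only [mem_filter, mem_univ, true_and] at hj
    exact ⟨(i, j), by simp [hj], rfl⟩

lemma col_norm_le (M : Fin n₁ × Fin n₂ → ZMod 2) (j₀ : Fin n₂) :
    hammingNorm (fun i => M (i, j₀)) ≤ hammingNorm M := by
  unfold hammingNorm
  apply Finset.card_le_card_of_injOn (fun i => (i, j₀))
  · intro i hi
    simp only [mem_coe, mem_filter, mem_univ, true_and] at hi ⊢
    exact hi
  · intro a _ b _ h
    exact (Prod.mk.injEq _ _ _ _).mp h |>.1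

lemma cols_norm_le (M : Fin n₁ × Fin n₂ → ZMod 2) (g : Fin n₂ → ZMod 2)
    (h : ∀ j, g j ≠ 0 → ∃ i, M (i, j) ≠ 0) :
    hammingNorm g ≤ hammingNorm M := by
  rcases eq_or_ne g 0 with rfl | hg
  · simp
  obtain ⟨j₁, hj₁⟩ := Function.ne_iff.mp hg
  have : Nonempty (Fin n₁) := ⟨(h j₁ hj₁).choose⟩
  unfold hammingNorm
  apply Finset.card_le_card_of_injOn
    (fun j => if hj : ∃ i, M (i, j) ≠ 0 then (hj.choose, j) else (Classical.arbitrary _, j))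
  · intro j hj
    simp only [mem_coe, mem_filter, mem_univ, true_and] at hj ⊢
    have hex := h j hj
    rw [dif_pos hex]
    exact hex.choose_spec
  · intro a _ b _ hab
    by_cases ha : ∃ i, M (i, a) ≠ 0 <;> by_cases hb : ∃ i, M (i, b) ≠ 0 <;>
      simp [ha, hb] at hab <;> tauto

/-- the column-functional map is linear -/
def colMap (φ : (Fin n₁ → ZMod 2) →ₗ[ZMod 2] ZMod 2) :
    (Fin n₁ × Fin n₂ → ZMod 2) →ₗ[ZMod 2] (Fin n₂ → ZMod 2) where
  toFun M := fun j => φ (fun i => M (i, j))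
  map_add' M N := by
    funext j
    show φ (fun i => M (i,j) + N (i,j)) = φ (fun i => M (i,j)) + φ (fun i => N (i,j))
    rw [← map_add]; rfl
  map_smul' a M := by
    funext j
    show φ (fun i => a * M (i,j)) = a • φ (fun i => M (i,j))
    have : (fun i => a * M (i,j)) = a • (fun i => M (i,j)) := by
      funext i; simp [smul_eq_mul]
    rw [this, _root_.map_smul]

end aux

/-- The dual tensor code `C₁ ⊗ F₂^{n₂} + F₂^{n₁} ⊗ C₂` as a submodule of
`F₂^{n₁ × n₂}`. -/
def dualTensorCode {n₁ n₂ : ℕ}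
    (C₁ : Submodule (ZMod 2) (Fin n₁ → ZMod 2))
    (C₂ : Submodule (ZMod 2) (Fin n₂ → ZMod 2)) :
    Submodule (ZMod 2) (Fin n₁ × Fin n₂ → ZMod 2) :=
  Submodule.span (ZMod 2)
    ({f | ∃ c ∈ C₁, ∃ v : Fin n₂ → ZMod 2, f = fun p => c p.1 * v p.2} ∪
     {f | ∃ c ∈ C₂, ∃ v : Fin n₁ → ZMod 2, f = fun p => v p.1 * c p.2})

/-- `d` is the minimum distance of a (nonzero) linear code `C`: the least
Hamming weight of a nonzero codeword. -/
def IsMinDist {ι : Type*} [Fintype ι]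
    (C : Submodule (ZMod 2) (ι → ZMod 2)) (d : ℕ) : Prop :=
  IsLeast {w : ℕ | ∃ c ∈ C, c ≠ 0 ∧ hammingNorm c = w} d

/-- key lemma: applying a functional vanishing on `C₁` to columns lands in `C₂`. -/
lemma colMap_mem {n₁ n₂ : ℕ}
    {C₁ : Submodule (ZMod 2) (Fin n₁ → ZMod 2)}
    {C₂ : Submodule (ZMod 2) (Fin n₂ → ZMod 2)}
    (φ : (Fin n₁ → ZMod 2) →ₗ[ZMod 2] ZMod 2) (hφ : ∀ c ∈ C₁, φ c = 0)
    {M : Fin n₁ × Fin n₂ → ZMod 2} (hM : M ∈ dualTensorCode C₁ C₂) :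
    (fun j => φ (fun i => M (i, j))) ∈ C₂ := by
  have hle : dualTensorCode C₁ C₂ ≤ C₂.comap (colMap φ) := by
    rw [dualTensorCode, Submodule.span_le]
    rintro f (⟨c, hc, v, rfl⟩ | ⟨c, hc, v, rfl⟩)
    · simp only [SetLike.mem_coe, Submodule.mem_comap]
      have : colMap φ (fun p => c p.1 * v p.2) = 0 := by
        funext j
        show φ (fun i => c i * v j) = 0
        have : (fun i => c i * v j) = v j • c := by funext i; simp [smul_eq_mul, mul_comm]
        rw [this, _root_.map_smul, hφ c hc, smul_zero]
      rw [this]; exact C₂.zero_mem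
    · simp only [SetLike.mem_coe, Submodule.mem_comap]
      have : colMap φ (fun p => v p.1 * c p.2) = φ v • c := by
        funext j
        show φ (fun i => v i * c j) = φ v * c j
        have : (fun i => v i * c j) = c j • v := by funext i; simp [smul_eq_mul, mul_comm]
        rw [this, _root_.map_smul, smul_eq_mul, mul_comm]
      rw [this]; exact C₂.smul_mem _ hc
  exact hle hM

/-- the minimum distance of the dual tensor code of nonzero codes
with minimum distances `d₁, d₂` is exactly `min d₁ d₂`. -/
theorem stmt_7 (n₁ n₂ d₁ d₂ : ℕ)
    (C₁ : Submodule (ZMod 2) (Fin n₁ → ZMod 2))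
    (C₂ : Submodule (ZMod 2) (Fin n₂ → ZMod 2))
    (h₁ : C₁ ≠ ⊥) (h₂ : C₂ ≠ ⊥)
    (hd₁ : IsMinDist C₁ d₁) (hd₂ : IsMinDist C₂ d₂) :
    IsMinDist (dualTensorCode C₁ C₂) (min d₁ d₂) := by
  obtain ⟨c₁, hc₁, hc₁0, hn₁⟩ := hd₁.1
  obtain ⟨c₂, hc₂, hc₂0, hn₂⟩ := hd₂.1
  obtain ⟨i₀, hi₀⟩ := Function.ne_iff.mp hc₁0
  obtain ⟨j₀, hj₀⟩ := Function.ne_iff.mp hc₂0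
  constructor
  · -- there is a codeword of weight exactly `min d₁ d₂`
    rcases le_total d₁ d₂ with hle | hle
    · rw [min_eq_left hle]
      refine ⟨fun p => c₁ p.1 * (if p.2 = j₀ then (1:ZMod 2) else 0), ?_, ?_, ?_⟩
      · exact Submodule.subset_span (Or.inl ⟨c₁, hc₁, fun j => if j = j₀ then 1 else 0, rfl⟩)
      · intro h
        have := congrFun h (i₀, j₀)
        simp at this
        exact hi₀ this
      · rw [norm_tensor_right, hn₁]
    · rw [min_eq_right hle]
      refine ⟨fun p => (if p.1 = i₀ then (1:ZMod 2) else 0) * c₂ p.2, ?_, ?_, ?_⟩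
      · exact Submodule.subset_span (Or.inr ⟨c₂, hc₂, fun i => if i = i₀ then 1 else 0, rfl⟩)
      · intro h
        have := congrFun h (i₀, j₀)
        simp at this
        exact hj₀ this
      · rw [norm_tensor_left, hn₂]
  · -- lower bound
    rintro w ⟨M, hM, hM0, rfl⟩
    by_cases hall : ∀ j, (fun i => M (i, j)) ∈ C₁
    · -- all columns in C₁: a nonzero column gives weight ≥ d₁
      obtain ⟨p₀, hp₀⟩ := Function.ne_iff.mp hM0
      have hcol : (fun i => M (i, p₀.2)) ≠ 0 := by
        intro h
        have := congrFun h p₀.1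
        simp only [Pi.zero_apply] at this
        exact hp₀ (by simpa using this)
      have hd : d₁ ≤ hammingNorm (fun i => M (i, p₀.2)) :=
        hd₁.2 ⟨_, hall p₀.2, hcol, rfl⟩
      exact le_trans (min_le_left _ _) (hd.trans (col_norm_le M p₀.2))
    · push_neg at hall
      obtain ⟨jb, hjb⟩ := hall
      -- find a functional vanishing on C₁ but not on column jb
      have hq : C₁.mkQ (fun i => M (i, jb)) ≠ 0 := by
        simp only [Submodule.mkQ_apply, ne_eq, Submodule.Quotient.mk_eq_zero]
        exact hjb
      have : ¬ ∀ ψ : Module.Dual (ZMod 2) ((Fin n₁ → ZMod 2) ⧸ C₁),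
          ψ (C₁.mkQ (fun i => M (i, jb))) = 0 := by
        rw [Module.forall_dual_apply_eq_zero_iff (ZMod 2)]
        exact hq
      push_neg at this
      obtain ⟨ψ, hψ⟩ := this
      set φ := ψ.comp C₁.mkQ with hφdef
      have hφ0 : ∀ c ∈ C₁, φ c = 0 := by
        intro c hc
        simp only [hφdef, LinearMap.comp_apply, Submodule.mkQ_apply]
        rw [(Submodule.Quotient.mk_eq_zero _).mpr hc, map_zero]
      have hg : (fun j => φ (fun i => M (i, j))) ∈ C₂ := colMap_mem φ hφ0 hM
      have hgne : (fun j => φ (fun i => M (i, j))) ≠ 0 := by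
        intro h
        exact hψ (congrFun h jb)
      have hd : d₂ ≤ hammingNorm (fun j => φ (fun i => M (i, j))) :=
        hd₂.2 ⟨_, hg, hgne, rfl⟩
      have hle : hammingNorm (fun j => φ (fun i => M (i, j))) ≤ hammingNorm M := by
        apply cols_norm_le
        intro j hj
        by_contra hcon
        push_neg at hcon
        apply hj
        have : (fun i => M (i, j)) = 0 := funext hcon
        rw [this, map_zero]
      exact le_trans (min_le_right _ _) (hd.trans hle)
end

section
/- (Lower bound part of dual-tensor distance) If M is a nonzero element of C₁ ⊗ F₂^{n₂} + F₂^{n₁} ⊗ C₂, viewed as an n₁×n₂ matrix over F₂, then the number of nonzero entries of M is at least min(d₁, d₂), where d₁, d₂ are the minimum distances of C₁ and C₂. -/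
open Matrix

/-- Applying a functional vanishing on `C₂` to each row of an element of the
dual tensor code yields a codeword of `C₁`. -/
lemma rowCheck_mem {n₁ n₂ : ℕ}
    (C₁ : Submodule (ZMod 2) (Fin n₁ → ZMod 2))
    (C₂ : Submodule (ZMod 2) (Fin n₂ → ZMod 2))
    (φ : (Fin n₂ → ZMod 2) →ₗ[ZMod 2] ZMod 2) (hφ : ∀ c ∈ C₂, φ c = 0)
    (M : Fin n₁ × Fin n₂ → ZMod 2) (hM : M ∈ dualTensorCode C₁ C₂) :
    (fun i => φ (fun j => M (i, j))) ∈ C₁ := by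
  induction hM using Submodule.span_induction with
  | mem f hf =>
    rcases hf with ⟨c, hc, v, rfl⟩ | ⟨c, hc, v, rfl⟩
    · have : (fun i => φ (fun j => c i * v j)) = fun i => c i * φ v := by
        funext i
        show φ (c i • v) = c i * φ v
        rw [φ.map_smul, smul_eq_mul]
      rw [this]
      have : (fun i => c i * φ v) = (φ v) • c := by
        funext i; simp [smul_eq_mul, mul_comm]
      rw [this]; exact C₁.smul_mem _ hc
    · have : (fun i => φ (fun j => v i * c j)) = fun i => v i * φ c := by
        funext i
        show φ (v i • c) = v i * φ c
        rw [φ.map_smul, smul_eq_mul]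
      rw [this, hφ c hc]
      have : (fun i => v i * (0 : ZMod 2)) = (0 : Fin n₁ → ZMod 2) := by
        funext i; exact mul_zero _
      rw [this]; exact C₁.zero_mem
  | zero =>
    have : (fun i => φ (fun j => (0 : Fin n₁ × Fin n₂ → ZMod 2) (i, j)))
        = (0 : Fin n₁ → ZMod 2) := by
      funext i; exact map_zero φ
    rw [this]; exact C₁.zero_mem
  | add f g _ _ hf hg =>
    have : (fun i => φ (fun j => (f + g) (i, j)))
        = (fun i => φ (fun j => f (i, j))) + fun i => φ (fun j => g (i, j)) := by
      funext i
      show φ ((fun j => f (i, j)) + fun j => g (i, j)) = _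
      rw [map_add]; rfl
    rw [this]; exact C₁.add_mem hf hg
  | smul a f _ hf =>
    have : (fun i => φ (fun j => (a • f) (i, j)))
        = a • fun i => φ (fun j => f (i, j)) := by
      funext i
      show φ (a • fun j => f (i, j)) = _
      rw [φ.map_smul]; rfl
    rw [this]; exact C₁.smul_mem a hf

lemma row_norm_le {n₁ n₂ : ℕ} (M : Fin n₁ × Fin n₂ → ZMod 2) (i : Fin n₁) :
    hammingNorm (fun j => M (i, j)) ≤ hammingNorm M := by
  simp only [hammingNorm, Fintype.card_subtype]
  exact Finset.card_le_card_of_injOn (fun j => (i, j))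
    (by intro j hj; simp_all) (by intro a _ b _ h; simpa using congrArg Prod.snd h)

/-- lower bound on the dual-tensor distance: any nonzero element
of the dual tensor code has Hamming weight at least `min d₁ d₂`, where `d₁, d₂`
lower-bound the weights of nonzero codewords of `C₁, C₂`. -/
theorem stmt_8 (n₁ n₂ d₁ d₂ : ℕ)
    (C₁ : Submodule (ZMod 2) (Fin n₁ → ZMod 2))
    (C₂ : Submodule (ZMod 2) (Fin n₂ → ZMod 2))
    (hd₁ : ∀ c ∈ C₁, c ≠ 0 → d₁ ≤ hammingNorm c)
    (hd₂ : ∀ c ∈ C₂, c ≠ 0 → d₂ ≤ hammingNorm c) :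
    ∀ M ∈ dualTensorCode C₁ C₂, M ≠ 0 → min d₁ d₂ ≤ hammingNorm M := by
  intro M hM hM0
  by_cases hrows : ∀ i, (fun j => M (i, j)) ∈ C₂
  · -- every row is in C₂; some row is nonzero
    obtain ⟨p, hp⟩ : ∃ p, M p ≠ 0 := by
      by_contra h; push_neg at h; exact hM0 (funext h)
    have hrne : (fun j => M (p.1, j)) ≠ 0 := by
      intro h
      exact hp (by simpa using congrFun h p.2)
    calc min d₁ d₂ ≤ d₂ := min_le_right _ _
      _ ≤ hammingNorm (fun j => M (p.1, j)) := hd₂ _ (hrows p.1) hrne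
      _ ≤ hammingNorm M := row_norm_le M p.1
  · push_neg at hrows
    obtain ⟨i₀, hi₀⟩ := hrows
    obtain ⟨p, hp⟩ : ∃ p, M p ≠ 0 := by
      by_contra h; push_neg at h; exact hM0 (funext h)
    haveI : Nonempty (Fin n₂) := ⟨p.2⟩
    obtain ⟨φ, hφx, hφker⟩ := C₂.exists_dual_map_eq_bot_of_notMem hi₀ inferInstance
    have hφ0 : ∀ c ∈ C₂, φ c = 0 := by
      intro c hc
      have : φ c ∈ C₂.map φ := Submodule.mem_map_of_mem hc
      rw [hφker] at this; simpa using this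
    set g : Fin n₁ → ZMod 2 := fun i => φ (fun j => M (i, j)) with hg
    have hgC : g ∈ C₁ := rowCheck_mem C₁ C₂ φ hφ0 M hM
    have hgne : g ≠ 0 := by
      intro h
      exact hφx (by simpa using congrFun h i₀)
    have hd : d₁ ≤ hammingNorm g := hd₁ g hgC hgne
    -- each i in support of g gives a nonzero row, pick a nonzero entry
    have key : hammingNorm g ≤ hammingNorm M := by
      simp only [hammingNorm, Fintype.card_subtype]
      have hpick : ∀ i ∈ Finset.univ.filter (fun i => g i ≠ 0),
          ∃ j, M (i, j) ≠ 0 := by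
        intro i hi
        simp only [Finset.mem_filter] at hi
        by_contra h; push_neg at h
        apply hi.2
        simp only [hg]
        have : (fun j => M (i, j)) = 0 := funext h
        rw [this, map_zero]
      choose! J hJ using hpick
      exact Finset.card_le_card_of_injOn (fun i => (i, J i))
        (by intro i hi
            simp only [Finset.mem_filter, Finset.mem_univ, true_and]
            simpa using hJ i (by simpa using hi))
        (by intro a _ b _ h; simpa using congrArg Prod.fst h)
    exact le_trans (min_le_left _ _) (le_trans hd key)
end

section
/- (Soundness of check product with a systematic code) Let C = ker H ⊆ F₂ⁿ be locally testable with soundness ρ with respect to an m×n check matrix H (t := m checks), and let H_X = [I_{m_X} | h_X] be an m_X × n_X matrix over F₂ in systematic form with C_X = ker H_X. Then the code ker(H_X ⊗ H) ⊆ F₂^{n_X·n} is locally testable with soundness at least ρ·n_X/m_X with respect to the check matrix H_X ⊗ H: for every x ∈ F₂^{n_X n}, |(H_X ⊗ H)x|/(m_X·m) ≥ (ρ·n_X/m_X)·d(x, ker(H_X⊗H))/(n_X·n). -/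
open Matrix

/-- Distance from a vector to the code `ker A`. -/
noncomputable def distToCode {ι κ : Type*} [Fintype ι] [Fintype κ]
    (A : Matrix κ ι (ZMod 2)) (x : ι → ZMod 2) : ℕ :=
  sInf {d : ℕ | ∃ c : ι → ZMod 2, A.mulVec c = 0 ∧ hammingDist x c = d}


lemma distToCode_spec {ι κ : Type*} [Fintype ι] [Fintype κ]
    (A : Matrix κ ι (ZMod 2)) (x : ι → ZMod 2) :
    ∃ c : ι → ZMod 2, A.mulVec c = 0 ∧ hammingDist x c = distToCode A x := by
  have hne : {d : ℕ | ∃ c : ι → ZMod 2, A.mulVec c = 0 ∧ hammingDist x c = d}.Nonempty :=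
    ⟨hammingDist x 0, 0, by simp, rfl⟩
  exact Nat.sInf_mem hne

lemma distToCode_le {ι κ : Type*} [Fintype ι] [Fintype κ]
    (A : Matrix κ ι (ZMod 2)) (x c : ι → ZMod 2) (hc : A.mulVec c = 0) :
    distToCode A x ≤ hammingDist x c :=
  Nat.sInf_le ⟨c, hc, rfl⟩

-- hamming norm over product index
lemma hn_split {α β : Type*} [Fintype α] [Fintype β] (w : α × β → ZMod 2) :
    hammingNorm w = ∑ a : α, hammingNorm (fun b => w (a, b)) := by
  simp [hammingNorm, Finset.card_filter, Fintype.sum_prod_type]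

lemma hd_split {α γ β : Type*} [Fintype α] [Fintype γ] [Fintype β]
    (u v : (α ⊕ γ) × β → ZMod 2) (h : ∀ k j, u (Sum.inr k, j) = v (Sum.inr k, j)) :
    hammingDist u v = ∑ a : α, hammingDist (fun b => u (Sum.inl a, b)) (fun b => v (Sum.inl a, b)) := by
  simp [hammingDist, Finset.card_filter, Fintype.sum_prod_type, Fintype.sum_sum_type, h]

lemma kron_mulVec {m n mX kX : ℕ}
    (H : Matrix (Fin m) (Fin n) (ZMod 2)) (hX : Matrix (Fin mX) (Fin kX) (ZMod 2))
    (x : (Fin mX ⊕ Fin kX) × Fin n → ZMod 2) (i : Fin mX) (r : Fin m) :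
    ((Matrix.kroneckerMap (· * ·)
        (Matrix.fromCols (1 : Matrix (Fin mX) (Fin mX) (ZMod 2)) hX) H).mulVec x) (i, r)
      = (H.mulVec (fun j => x (Sum.inl i, j) + ∑ k, hX i k * x (Sum.inr k, j))) r := by
  simp only [Matrix.mulVec, dotProduct, Matrix.kroneckerMap, Matrix.of_apply,
    Fintype.sum_prod_type, Fintype.sum_sum_type, Matrix.fromCols_apply_inl,
    Matrix.fromCols_apply_inr, Matrix.one_apply, mul_add, Finset.mul_sum]
  rw [Finset.sum_comm (γ := Fin kX)]
  · simp only [ite_mul, Finset.sum_ite_eq, Finset.mem_univ, if_pos, Finset.sum_add_distrib,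
      mul_assoc]
    congr 1
    · simp [ite_mul]
    · simp only [mul_left_comm]

/-- if `C = ker H` (an `m × n` check matrix) is locally testable
with soundness `ρ`, and `H_X = [I_{m_X} | h_X]` is a systematic `m_X × n_X`
check matrix (`n_X = m_X + k_X`), then `ker (H_X ⊗ H)` is locally testable with
soundness at least `ρ·n_X/m_X`. -/
theorem stmt_11 (m n mX kX : ℕ) (hm : 0 < m) (hn : 0 < n) (hmX : 0 < mX)
    (H : Matrix (Fin m) (Fin n) (ZMod 2))
    (hX : Matrix (Fin mX) (Fin kX) (ZMod 2)) (ρ : ℝ)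
    (hsound : ∀ x : Fin n → ZMod 2,
      (hammingNorm (H.mulVec x) : ℝ) / m ≥ ρ / n * (distToCode H x : ℝ)) :
    ∀ x : (Fin mX ⊕ Fin kX) × Fin n → ZMod 2,
      (hammingNorm ((Matrix.kroneckerMap (· * ·)
          (Matrix.fromCols (1 : Matrix (Fin mX) (Fin mX) (ZMod 2)) hX) H).mulVec x) : ℝ) /
            (mX * m) ≥
        (ρ * (mX + kX) / mX) *
          (distToCode (Matrix.kroneckerMap (· * ·)
            (Matrix.fromCols (1 : Matrix (Fin mX) (Fin mX) (ZMod 2)) hX) H) x : ℝ) /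
          ((mX + kX) * n) := by
  intro x
  set A := Matrix.kroneckerMap (· * ·)
      (Matrix.fromCols (1 : Matrix (Fin mX) (Fin mX) (ZMod 2)) hX) H with hA
  set y : Fin mX → Fin n → ZMod 2 :=
    fun i j => x (Sum.inl i, j) + ∑ k, hX i k * x (Sum.inr k, j) with hy
  -- choose minimizers for each slice
  choose c hc1 hc2 using fun i => distToCode_spec H (y i)
  -- the corrected word
  set x' : (Fin mX ⊕ Fin kX) × Fin n → ZMod 2 :=
    fun p => Sum.elim (fun i => c i p.2 + ∑ k, hX i k * x (Sum.inr k, p.2))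
      (fun k => x (Sum.inr k, p.2)) p.1 with hx'
  have hsub : ∀ a b : ZMod 2, a - b = a + b := by decide
  have hx'ker : A.mulVec x' = 0 := by
    funext p
    obtain ⟨i, r⟩ := p
    rw [hA, kron_mulVec]
    have : (fun j => x' (Sum.inl i, j) + ∑ k, hX i k * x' (Sum.inr k, j)) = c i := by
      funext j
      show (c i j + ∑ k, hX i k * x (Sum.inr k, j)) + ∑ k, hX i k * x (Sum.inr k, j) = c i j
      rw [add_assoc, CharTwo.add_self_eq_zero, add_zero]
    rw [this, hc1]
    rfl
  -- distance bound
  have hdist : distToCode A x ≤ ∑ i, distToCode H (y i) := by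
    calc distToCode A x ≤ hammingDist x x' := distToCode_le A x x' hx'ker
    _ = ∑ i, hammingDist (fun j => x (Sum.inl i, j)) (fun j => x' (Sum.inl i, j)) :=
        hd_split x x' (fun k j => rfl)
    _ = ∑ i, distToCode H (y i) := by
        apply Finset.sum_congr rfl
        intro i _
        rw [← hc2 i, hammingDist_eq_hammingNorm, hammingDist_eq_hammingNorm]
        congr 1
        funext j
        show -x (Sum.inl i, j) + (c i j + ∑ k, hX i k * x (Sum.inr k, j)) = -y i j + c i j
        rw [hy]
        have hneg : ∀ a : ZMod 2, -a = a := by decide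
        simp only [hneg]
        ring
  -- norm identity
  have hnorm : hammingNorm (A.mulVec x) = ∑ i, hammingNorm (H.mulVec (y i)) := by
    rw [show A.mulVec x = fun p : Fin mX × Fin m => (H.mulVec (y p.1)) p.2 from
      funext fun p => by obtain ⟨i, r⟩ := p; exact kron_mulVec H hX x i r]
    exact hn_split _
  -- key real inequality
  have hmR : (0 : ℝ) < m := by exact_mod_cast hm
  have hnR : (0 : ℝ) < n := by exact_mod_cast hn
  have hmXR : (0 : ℝ) < mX := by exact_mod_cast hmX
  have key : (hammingNorm (A.mulVec x) : ℝ) * n ≥ ρ * m * (distToCode A x) := by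
    rcases le_or_gt 0 ρ with hρ | hρ
    · have step : ∀ i : Fin mX,
          ρ * m * (distToCode H (y i) : ℝ) ≤ (hammingNorm (H.mulVec (y i)) : ℝ) * n := by
        intro i
        have h := hsound (y i)
        have h2 := mul_le_mul_of_nonneg_right h (le_of_lt (mul_pos hmR hnR))
        calc ρ * m * (distToCode H (y i) : ℝ)
            = ρ / n * (distToCode H (y i) : ℝ) * (m * n) := by field_simp
          _ ≤ (hammingNorm (H.mulVec (y i)) : ℝ) / m * (m * n) := h2
          _ = (hammingNorm (H.mulVec (y i)) : ℝ) * n := by field_simp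
      calc ρ * m * (distToCode A x : ℝ)
          ≤ ρ * m * (∑ i, (distToCode H (y i) : ℕ) : ℝ) := by
            apply mul_le_mul_of_nonneg_left _ (by positivity)
            exact_mod_cast hdist
        _ = ∑ i, ρ * m * (distToCode H (y i) : ℝ) := by
            rw [Finset.mul_sum]
        _ ≤ ∑ i, (hammingNorm (H.mulVec (y i)) : ℝ) * n := Finset.sum_le_sum fun i _ => step i
        _ = (hammingNorm (A.mulVec x) : ℝ) * n := by
            rw [hnorm, ← Finset.sum_mul]; push_cast; ring
    · have h1 : ρ * m * (distToCode A x : ℝ) ≤ 0 := by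
        apply mul_nonpos_of_nonpos_of_nonneg _ (by positivity)
        nlinarith
      have h2 : (0:ℝ) ≤ (hammingNorm (A.mulVec x) : ℝ) * n := by positivity
      linarith
  -- final algebra
  rw [ge_iff_le, div_le_div_iff₀ (by positivity) (by positivity)]
  have e1 : ρ * (mX + kX) / mX * (distToCode A x : ℝ) * ((mX : ℝ) * m)
      = ρ * m * (distToCode A x : ℝ) * ((mX : ℝ) + kX) := by
    field_simp
  rw [e1]
  have hk : (0:ℝ) ≤ (mX : ℝ) + kX := by positivity
  nlinarith [mul_le_mul_of_nonneg_right key hk]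
end

section
/- Let Q = css(H_X, H_Z) be a CSS code on n_q qubits with C_X = ker H_X, C_Z = ker H_Z, and let C = ker H ⊆ F₂ⁿ with C^⊥ ≠ F₂ⁿ, C_Z^⊥ ≠ F₂^{n_q}, C_X^⊥ ≠ F₂^{n_q}. Then the X-distance of the check product code Q ⋆ C = css(H_X ⊗ H, H_Z ⊗ H) satisfies d_x(Q⋆C) = min(d(C_X), d(C)), where d_x(Q⋆C) = min{|w| : w ∈ (C_X ⋆ C) \ (C_Z ⋆ C)^⊥} and C_X ⋆ C = ker(H_X ⊗ H) = C_X ⊗ F₂ⁿ + F₂^{n_q} ⊗ C. -/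
open Matrix Finset

/-- The dual of a set of vectors in `F₂^ι` under the standard bilinear form. -/
def dualOf {ι : Type*} [Fintype ι] (S : Set (ι → ZMod 2)) : Set (ι → ZMod 2) :=
  {u | ∀ v ∈ S, ∑ i, u i * v i = 0}

section helpers

variable {α β m₁ m₂ : Type*} [Fintype α] [Fintype β] [Fintype m₁] [Fintype m₂]

set_option linter.unusedSectionVars false

lemma zmod2_eq_one {t : ZMod 2} (h : t ≠ 0) : t = 1 := by revert h; revert t; decide

lemma kron_mulVec_tens (A : Matrix m₁ α (ZMod 2)) (B : Matrix m₂ β (ZMod 2))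
    (a : α → ZMod 2) (b : β → ZMod 2) :
    (Matrix.kroneckerMap (· * ·) A B).mulVec (fun p => a p.1 * b p.2)
      = fun q => A.mulVec a q.1 * B.mulVec b q.2 := by
  funext q
  simp only [Matrix.mulVec, dotProduct, Fintype.sum_prod_type, Matrix.kroneckerMap_apply]
  rw [Finset.sum_mul_sum]
  exact Finset.sum_congr rfl fun i _ => Finset.sum_congr rfl fun j _ => by ring

lemma pairing_tens (a a' : α → ZMod 2) (b b' : β → ZMod 2) :
    ∑ p : α × β, (a p.1 * b p.2) * (a' p.1 * b' p.2)
      = (∑ i, a i * a' i) * (∑ j, b j * b' j) := by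
  rw [Finset.sum_mul_sum, Fintype.sum_prod_type]
  exact Finset.sum_congr rfl fun i _ => Finset.sum_congr rfl fun j _ => by ring

lemma hammingNorm_tens (a : α → ZMod 2) (b : β → ZMod 2) :
    hammingNorm (fun p : α × β => a p.1 * b p.2) = hammingNorm a * hammingNorm b := by
  classical
  simp only [hammingNorm]
  rw [← Finset.card_product]
  congr 1
  ext p
  simp only [Finset.mem_filter, Finset.mem_univ, true_and, Finset.mem_product,
    mul_ne_zero_iff]

lemma norm_proj_le (u : α → ZMod 2) (v : α × β → ZMod 2)
    (h : ∀ i, u i ≠ 0 → ∃ j, v (i, j) ≠ 0) : hammingNorm u ≤ hammingNorm v := by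
  classical
  by_cases he : ∃ i, u i ≠ 0
  · obtain ⟨i0, hi0⟩ := he
    obtain ⟨j0, _⟩ := h i0 hi0
    simp only [hammingNorm]
    apply Finset.card_le_card_of_injOn
      (fun i => (i, if h' : ∃ j, v (i, j) ≠ 0 then h'.choose else j0))
    · intro i hi
      simp only [Finset.mem_coe, Finset.mem_filter, Finset.mem_univ, true_and] at hi ⊢
      have h' : ∃ j, v (i, j) ≠ 0 := h i hi
      rw [dif_pos h']
      exact h'.choose_spec
    · intro i _ i' _ hii
      exact congrArg Prod.fst hii
  · push_neg at he
    have : u = 0 := funext he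
    simp [this]

lemma norm_row_le (v : α × β → ZMod 2) (i : α) :
    hammingNorm (fun j => v (i, j)) ≤ hammingNorm v := by
  classical
  simp only [hammingNorm]
  apply Finset.card_le_card_of_injOn (fun j => (i, j))
  · intro j hj
    simpa using hj
  · intro j _ j' _ h
    exact congrArg Prod.snd h

lemma exists_one {ι : Type*} [Fintype ι] (S : Set (ι → ZMod 2))
    (h : dualOf S ≠ Set.univ) : ∃ i, ∃ c ∈ S, c i = 1 := by
  by_contra hcon
  push_neg at hcon
  apply h
  ext u
  simp only [Set.mem_univ, iff_true, dualOf, Set.mem_setOf_eq]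
  intro v hv
  have hz : ∀ i, v i = 0 := by
    intro i
    have := hcon i v hv
    revert this; generalize v i = x; revert x; decide
  simp [hz]

lemma single_norm [DecidableEq α] (i : α) :
    hammingNorm (fun j => if j = i then (1 : ZMod 2) else 0) = 1 := by
  classical
  simp only [hammingNorm]
  rw [Finset.card_eq_one]
  refine ⟨i, ?_⟩
  ext j
  simp only [Finset.mem_filter, Finset.mem_univ, true_and, Finset.mem_singleton]
  constructor
  · intro hj; by_contra hji; simp [hji] at hj
  · intro hj; simp [hj]

end helpers

/-- X-distance of the check product code
`Q ⋆ C = css(H_X ⊗ H, H_Z ⊗ H)`. Assuming `H_X H_Zᵀ = 0`, `C^⊥ ≠ F₂ⁿ`,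
`C_Z^⊥ ≠ F₂^{n_q}`, `C_X^⊥ ≠ F₂^{n_q}`, and `d(C_X) = dX`, `d(C) = dC` are the
minimum distances of `C_X = ker H_X` and `C = ker H`, the X-distance
`min{|w| : w ∈ ker(H_X ⊗ H) \ (ker(H_Z ⊗ H))^⊥}` equals `min dX dC`. -/
theorem stmt_19 (nq mX mZ n mH dX dC : ℕ)
    (HX : Matrix (Fin mX) (Fin nq) (ZMod 2))
    (HZ : Matrix (Fin mZ) (Fin nq) (ZMod 2))
    (H : Matrix (Fin mH) (Fin n) (ZMod 2))
    (hcss : HX * HZᵀ = 0)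
    (hC : dualOf {c : Fin n → ZMod 2 | H.mulVec c = 0} ≠ Set.univ)
    (hCZ : dualOf {c : Fin nq → ZMod 2 | HZ.mulVec c = 0} ≠ Set.univ)
    (hCX : dualOf {c : Fin nq → ZMod 2 | HX.mulVec c = 0} ≠ Set.univ)
    (hdX : IsLeast {w : ℕ | ∃ c : Fin nq → ZMod 2,
        HX.mulVec c = 0 ∧ c ≠ 0 ∧ hammingNorm c = w} dX)
    (hdC : IsLeast {w : ℕ | ∃ c : Fin n → ZMod 2,
        H.mulVec c = 0 ∧ c ≠ 0 ∧ hammingNorm c = w} dC) :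
    IsLeast {w : ℕ | ∃ v : Fin nq × Fin n → ZMod 2,
        (Matrix.kroneckerMap (· * ·) HX H).mulVec v = 0 ∧
        v ∉ dualOf {u : Fin nq × Fin n → ZMod 2 |
          (Matrix.kroneckerMap (· * ·) HZ H).mulVec u = 0} ∧
        hammingNorm v = w} (min dX dC) := by
  constructor
  · -- membership: construct a vector of weight min dX dC
    obtain ⟨x, hxker, hxne, hxw⟩ := hdX.1
    obtain ⟨c, hcker, hcne, hcw⟩ := hdC.1
    rcases le_or_gt dX dC with hle | hlt
    · rw [min_eq_left hle]
      obtain ⟨i, c₁, hc₁, hc₁i⟩ := exists_one _ hC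
      obtain ⟨k, hk⟩ := Function.ne_iff.mp hxne
      have hk' : x k ≠ 0 := by simpa using hk
      set eI : Fin n → ZMod 2 := fun t => if t = i then 1 else 0 with heI
      set eK : Fin nq → ZMod 2 := fun t => if t = k then 1 else 0 with heK
      refine ⟨fun p => x p.1 * eI p.2, ?_, ?_, ?_⟩
      · rw [kron_mulVec_tens]
        funext q
        rw [hxker]
        simp
      · intro hdual
        have hmem : (fun p : Fin nq × Fin n => eK p.1 * c₁ p.2) ∈
            {u : Fin nq × Fin n → ZMod 2 |
              (Matrix.kroneckerMap (· * ·) HZ H).mulVec u = 0} := by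
          rw [Set.mem_setOf_eq, kron_mulVec_tens]
          funext q
          rw [hc₁]
          simp
        have := hdual _ hmem
        simp only [] at this
        rw [pairing_tens] at this
        have hx1 : x k = 1 := zmod2_eq_one hk'
        have e1 : (∑ t, x t * eK t) = 1 := by
          simp [heK, mul_ite, Finset.sum_ite_eq', hx1]
        have e2 : (∑ t, eI t * c₁ t) = 1 := by
          simp [heI, ite_mul, Finset.sum_ite_eq, hc₁i]
        rw [e1, e2] at this
        exact absurd this (by decide)
      · rw [hammingNorm_tens, heI, single_norm, hxw, mul_one]
    · rw [min_eq_right hlt.le]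
      obtain ⟨j, z, hz, hzj⟩ := exists_one _ hCZ
      obtain ⟨i, hi⟩ := Function.ne_iff.mp hcne
      have hi' : c i ≠ 0 := by simpa using hi
      set eJ : Fin nq → ZMod 2 := fun t => if t = j then 1 else 0 with heJ
      set eI : Fin n → ZMod 2 := fun t => if t = i then 1 else 0 with heI
      refine ⟨fun p => eJ p.1 * c p.2, ?_, ?_, ?_⟩
      · rw [kron_mulVec_tens]
        funext q
        rw [hcker]
        simp
      · intro hdual
        have hmem : (fun p : Fin nq × Fin n => z p.1 * eI p.2) ∈
            {u : Fin nq × Fin n → ZMod 2 |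
              (Matrix.kroneckerMap (· * ·) HZ H).mulVec u = 0} := by
          rw [Set.mem_setOf_eq, kron_mulVec_tens]
          funext q
          rw [hz]
          simp
        have := hdual _ hmem
        simp only [] at this
        rw [pairing_tens] at this
        have hc1 : c i = 1 := zmod2_eq_one hi'
        have e1 : (∑ t, eJ t * z t) = 1 := by
          simp [heJ, ite_mul, Finset.sum_ite_eq, hzj]
        have e2 : (∑ t, c t * eI t) = 1 := by
          simp [heI, mul_ite, Finset.sum_ite_eq', hc1]
        rw [e1, e2] at this
        exact absurd this (by decide)
      · rw [hammingNorm_tens, heJ, single_norm, hcw, one_mul]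
  · -- lower bound
    rintro w ⟨v, hvker, hvdual, rfl⟩
    have hv0 : v ≠ 0 := by
      rintro rfl
      exact hvdual (by intro u hu; simp)
    by_cases hrows : ∀ i, H.mulVec (fun j => v (i, j)) = 0
    · obtain ⟨p, hp⟩ := Function.ne_iff.mp hv0
      have hrow : (fun j => v (p.1, j)) ≠ 0 := by
        intro h0
        exact hp (by simpa using congrFun h0 p.2)
      have h1 : dC ≤ hammingNorm (fun j => v (p.1, j)) :=
        hdC.2 ⟨_, hrows p.1, hrow, rfl⟩
      exact le_trans (min_le_right _ _) (h1.trans (norm_row_le v p.1))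
    · push_neg at hrows
      obtain ⟨i0, hi0⟩ := hrows
      obtain ⟨s, hs⟩ := Function.ne_iff.mp hi0
      set u : Fin nq → ZMod 2 := fun i => ∑ j, H s j * v (i, j) with hu
      have hus : u i0 ≠ 0 := by
        simpa [hu, Matrix.mulVec, dotProduct] using hs
      have hXu : HX.mulVec u = 0 := by
        funext r
        have hk := congrFun hvker (r, s)
        simp only [Matrix.mulVec, dotProduct, Pi.zero_apply, Fintype.sum_prod_type,
          Matrix.kroneckerMap_apply] at hk ⊢
        rw [← hk]
        refine Finset.sum_congr rfl fun i _ => ?_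
        rw [hu, Finset.mul_sum]
        exact Finset.sum_congr rfl fun j _ => by ring
      have h1 : dX ≤ hammingNorm u :=
        hdX.2 ⟨u, hXu, fun h0 => hus (congrFun h0 i0), rfl⟩
      have h2 : hammingNorm u ≤ hammingNorm v := by
        apply norm_proj_le
        intro i hi
        by_contra hall
        push_neg at hall
        exact hi (by simp [hu, hall])
      exact le_trans (min_le_left _ _) (h1.trans h2)
end
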